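/- Let R be a commutative ring and let A = (a_{ij}), B = (b_{ij}), C = (c_{ij}) be infinite matrices with entries in R satisfying ∑_{j=0}^n a_{ij} b_{ℓ,n-j} = c_{i+ℓ,n} for all i, ℓ, n ≥ 0. Suppose that a_{00} and b_{00} are invertible in R. Then there exist unique formal power series f, g, h ∈ R[[u]] such that the row-generating series satisfy A_i(u) = f(u) h(u)^i, B_i(u) = g(u) h(u)^i, and C_i(u) = f(u) g(u) h(u)^i for all i ≥ 0; moreover f and g are invertible in R[[u]]. -/

import Mathlib

noncomputable section

open PowerSeries

/-- The `i`-th row-generating series `Mᵢ(u) = ∑_j m_{ij} uʲ ∈ R[[u]]` of an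
infinite matrix `M = (m_{ij})_{i,j ≥ 0}` with entries in `R`. -/
def rowGen {R : Type*} [CommRing R] (m : ℕ → ℕ → R) (i : ℕ) : PowerSeries R :=
  PowerSeries.mk (m i)
/-- Let `R` be a commutative ring and `A = (a_{ij})`,
`B = (b_{ij})`, `C = (c_{ij})` infinite matrices over `R` satisfying
`∑_{j=0}^n a_{ij} b_{ℓ,n-j} = c_{i+ℓ,n}` for all `i, ℓ, n ≥ 0`, with `a₀₀` and
`b₀₀` invertible in `R`.  Then there exist unique `f, g, h ∈ R[[u]]` such that
`Aᵢ(u) = f(u)h(u)ⁱ`, `Bᵢ(u) = g(u)h(u)ⁱ` and `Cᵢ(u) = f(u)g(u)h(u)ⁱ` for all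
`i ≥ 0`; moreover `f` and `g` are invertible in `R[[u]]`. -/
theorem pascal_like_classification {R : Type*} [CommRing R] (a b c : ℕ → ℕ → R)
    (hconv : ∀ i l n, ∑ j ∈ Finset.range (n + 1), a i j * b l (n - j) = c (i + l) n)
    (ha00 : IsUnit (a 0 0)) (hb00 : IsUnit (b 0 0)) :
    ∃ f g h : PowerSeries R,
      (∀ i, rowGen a i = f * h ^ i) ∧
      (∀ i, rowGen b i = g * h ^ i) ∧
      (∀ i, rowGen c i = f * g * h ^ i) ∧
      IsUnit f ∧ IsUnit g ∧
      ∀ f' g' h' : PowerSeries R,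
        ((∀ i, rowGen a i = f' * h' ^ i) ∧
         (∀ i, rowGen b i = g' * h' ^ i) ∧
         (∀ i, rowGen c i = f' * g' * h' ^ i)) →
        f' = f ∧ g' = g ∧ h' = h := by
  have hm : ∀ i l, rowGen a i * rowGen b l = rowGen c (i + l) := by
    intro i l
    ext n
    rw [PowerSeries.coeff_mul, Finset.Nat.sum_antidiagonal_eq_sum_range_succ_mk]
    simpa [rowGen] using hconv i l n
  set f := rowGen a 0 with hfdef
  set g := rowGen b 0 with hgdef
  have hfunit : IsUnit f := by
    rw [PowerSeries.isUnit_iff_constantCoeff]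
    simpa [hfdef, rowGen] using ha00
  have hgunit : IsUnit g := by
    rw [PowerSeries.isUnit_iff_constantCoeff]
    simpa [hgdef, rowGen] using hb00
  set gi := Ring.inverse g with hgidef
  have hgi : g * gi = 1 := Ring.mul_inverse_cancel _ hgunit
  set h := rowGen b 1 * gi with hhdef
  have hA : ∀ i, rowGen a i = f * h ^ i := by
    intro i
    induction i with
    | zero => simp [hfdef]
    | succ i ih =>
      have e1 : rowGen a i * rowGen b 1 = rowGen c (i + 1) := hm i 1
      have e2 : rowGen a (i + 1) * g = rowGen c (i + 1) := by
        simpa using hm (i + 1) 0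
      calc rowGen a (i + 1) = rowGen a (i + 1) * (g * gi) := by rw [hgi, mul_one]
        _ = (rowGen a i * rowGen b 1) * gi := by rw [← mul_assoc, e2, ← e1]
        _ = (f * h ^ i) * (rowGen b 1 * gi) := by rw [ih]; ring
        _ = f * h ^ (i + 1) := by rw [← hhdef]; ring
  have hC : ∀ i, rowGen c i = f * g * h ^ i := by
    intro i
    have := hm i 0
    rw [Nat.add_zero] at this
    rw [← this, hA i]; ring
  have hB : ∀ i, rowGen b i = g * h ^ i := by
    intro i
    have e1 : f * rowGen b i = rowGen c i := by simpa using hm 0 i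
    refine hfunit.mul_left_cancel ?_
    rw [e1, hC i]; ring
  refine ⟨f, g, h, hA, hB, hC, hfunit, hgunit, ?_⟩
  rintro f' g' h' ⟨h1, h2, _⟩
  have hf' : f' = f := by
    have := h1 0
    simpa [hfdef] using this.symm
  have hg' : g' = g := by
    have := h2 0
    simpa [hgdef] using this.symm
  refine ⟨hf', hg', ?_⟩
  refine hfunit.mul_left_cancel ?_
  have e1 := (h1 1).symm
  have e2 := hA 1
  rw [pow_one] at e1 e2
  rw [← hf', e1, e2, hf']
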